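/- In the wristband-drink world model, the policy π_A maximizing expected reward R_a + R_d(X_w) gives a wristband to every attendee (a₀ = g regardless of o₀), and then gives a drink iff the attendee's state at time 1 is w or w_p. Its expected reward is 99/100, which strictly exceeds the expected reward 149/300 of the policy that gives wristbands only to mature-looking attendees then drinks to wristband wearers. -/

import Mathlib

/- The wristband-drink world model of Armstrong's indifference paper.
`Omega` is the hidden randomness: maturity `mat` (prob 1/2), whether looks
match maturity `e` (prob 2/3), human ID check `idc` (prob 1/100), and a fair
coin `coin` used when the drink action is `i`. Everything else is a
deterministic function of `Omega` and the policy. -/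

namespace Wristband

inductive Act | g | ng | i
  deriving DecidableEq

instance instFintypeAct : Fintype Act := ⟨{Act.g, Act.ng, Act.i}, fun x => by cases x <;> simp⟩

inductive O1 | w | wp | nw | nwp
  deriving DecidableEq

instance instFintypeO1 : Fintype O1 := ⟨{O1.w, O1.wp, O1.nw, O1.nwp}, fun x => by cases x <;> simp⟩

structure Omega where
  mat : Bool
  e : Bool
  idc : Bool
  coin : Bool
  deriving DecidableEq, Fintype

noncomputable def P (ω : Omega) : ℝ :=
  (1 / 2) * (if ω.e then 2 / 3 else 1 / 3) *
    (if ω.idc then 1 / 100 else 99 / 100) * (1 / 2)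

def obs0 (ω : Omega) : Bool := if ω.e then ω.mat else !ω.mat

def step1 (ω : Omega) : Act → O1
  | Act.i => if ω.mat then O1.w else O1.nw
  | Act.g => if ω.mat then O1.w else if ω.idc then O1.nwp else O1.w
  | Act.ng => if ω.mat then (if ω.idc then O1.wp else O1.nw) else O1.nw

def step2 (ω : Omega) : Act → Bool
  | Act.g => true
  | Act.ng => false
  | Act.i => ω.coin

structure Pol where
  act0 : Bool → Act
  act1 : Bool → Act → O1 → Act

structure Hist where
  o0 : Bool
  a0 : Act
  o1 : O1
  a1 : Act
  o2 : Bool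
  deriving DecidableEq, Fintype

def trace (ω : Omega) (π : Pol) : Hist :=
  let o0 := obs0 ω
  let a0 := π.act0 o0
  let o1 := step1 ω a0
  let a1 := π.act1 o0 a0 o1
  ⟨o0, a0, o1, a1, step2 ω a1⟩

/-- Expected reward from the start under policy `π`. -/
noncomputable def ER (R : Hist → ℝ) (π : Pol) : ℝ := ∑ ω, P ω * R (trace ω π)

def wrist : O1 → Bool
  | O1.w => true | O1.wp => true | _ => false

def pen : O1 → Bool
  | O1.wp => true | O1.nwp => true | _ => false

noncomputable def Ip (h : Hist) : ℝ := if pen h.o1 then 1 else 0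
noncomputable def Ii (h : Hist) : ℝ := if h.a0 = Act.i then 1 else 0
noncomputable def Iw (h : Hist) : ℝ := if wrist h.o1 then 1 else 0
noncomputable def Idr (h : Hist) : ℝ := if h.o2 then 1 else 0

/-- `R_a = -I_p - I_i`. -/
noncomputable def Ra (h : Hist) : ℝ := -Ip h - Ii h
/-- `R_d(X_w) = I_d (2 I_w - 1)`. -/
noncomputable def Rd (h : Hist) : ℝ := Idr h * (2 * Iw h - 1)

/-- Partial histories (prefixes): empty, after `o₀`, and after `o₀a₀o₁`. -/
inductive Pre
  | root
  | obs (o0 : Bool)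
  | mid (o0 : Bool) (a0 : Act) (o1 : O1)

def extendB (h : Hist) : Pre → Bool
  | Pre.root => true
  | Pre.obs o0 => decide (h.o0 = o0)
  | Pre.mid o0 a0 o1 => decide (h.o0 = o0 ∧ h.a0 = a0 ∧ h.o1 = o1)

/-- Probability of the partial history `p` under `π`. -/
noncomputable def den (p : Pre) (π : Pol) : ℝ :=
  ∑ ω, if extendB (trace ω π) p then P ω else 0

/-- Conditional expectation `E^π[I | p]` of an indicator/reward `I` given the
partial history `p`, under policy `π`. -/
noncomputable def cexp (I : Hist → ℝ) (p : Pre) (π : Pol) : ℝ :=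
  (∑ ω, if extendB (trace ω π) p then P ω * I (trace ω π) else 0) / den p π

/-- Posterior probability that the attendee is mature given `(o₀, a₀, o₁)`. -/
noncomputable def postM (o0 : Bool) (a0 : Act) (o1 : O1) : ℝ :=
  (∑ ω, if obs0 ω = o0 ∧ step1 ω a0 = o1 ∧ ω.mat then P ω else 0) /
  (∑ ω, if obs0 ω = o0 ∧ step1 ω a0 = o1 then P ω else 0)

/-- `I_{Y₀}`: posterior probability of mature AND human-ID-checked. -/
noncomputable def IY0m (o0 : Bool) (a0 : Act) (o1 : O1) : ℝ :=
  (∑ ω, if obs0 ω = o0 ∧ step1 ω a0 = o1 ∧ ω.mat ∧ ω.idc then P ω else 0) /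
  (∑ ω, if obs0 ω = o0 ∧ step1 ω a0 = o1 then P ω else 0)

/-- `I_{Y₁}`: posterior probability of immature AND human-ID-checked. -/
noncomputable def IY1m (o0 : Bool) (a0 : Act) (o1 : O1) : ℝ :=
  (∑ ω, if obs0 ω = o0 ∧ step1 ω a0 = o1 ∧ ω.mat = false ∧ ω.idc then P ω else 0) /
  (∑ ω, if obs0 ω = o0 ∧ step1 ω a0 = o1 then P ω else 0)

noncomputable def IY0 (h : Hist) : ℝ := IY0m h.o0 h.a0 h.o1
noncomputable def IY1 (h : Hist) : ℝ := IY1m h.o0 h.a0 h.o1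

/-- The policy that gives everyone a wristband, then a drink iff wristband. -/
def giveAll : Pol := ⟨fun _ => Act.g, fun _ _ o1 => if wrist o1 then Act.g else Act.ng⟩

/-- The policy that gives a wristband iff the attendee looks mature (`o₀ = l_m`),
then a drink iff wristband. -/
def lookPol : Pol :=
  ⟨fun o0 => if o0 then Act.g else Act.ng,
   fun _ _ o1 => if wrist o1 then Act.g else Act.ng⟩



def eqv : Omega ≃ Bool × Bool × Bool × Bool where
  toFun ω := (ω.mat, ω.e, ω.idc, ω.coin)
  invFun x := ⟨x.1, x.2.1, x.2.2.1, x.2.2.2⟩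
  left_inv := fun _ => rfl
  right_inv := fun _ => rfl

lemma sum_omega (F : Omega → ℝ) : ∑ ω, F ω =
    F ⟨true,true,true,true⟩ + F ⟨true,true,true,false⟩ + F ⟨true,true,false,true⟩ + F ⟨true,true,false,false⟩ +
    F ⟨true,false,true,true⟩ + F ⟨true,false,true,false⟩ + F ⟨true,false,false,true⟩ + F ⟨true,false,false,false⟩ +
    F ⟨false,true,true,true⟩ + F ⟨false,true,true,false⟩ + F ⟨false,true,false,true⟩ + F ⟨false,true,false,false⟩ +
    F ⟨false,false,true,true⟩ + F ⟨false,false,true,false⟩ + F ⟨false,false,false,true⟩ + F ⟨false,false,false,false⟩ := by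
  rw [← Equiv.sum_comp eqv.symm F]
  simp [Fintype.sum_prod_type, eqv]
  ring

def tr (ω : Omega) (a0 : Act) (f : O1 → Act) : Hist :=
  ⟨obs0 ω, a0, step1 ω a0, f (step1 ω a0), step2 ω (f (step1 ω a0))⟩

noncomputable def G (o0 : Bool) (a0 : Act) (f : O1 → Act) : ℝ :=
  ∑ ω, if obs0 ω = o0 then P ω * (Ra (tr ω a0 f) + Rd (tr ω a0 f)) else 0

lemma ER_split (π : Pol) : ER (fun h => Ra h + Rd h) π =
    G true (π.act0 true) (π.act1 true (π.act0 true)) +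
    G false (π.act0 false) (π.act1 false (π.act0 false)) := by
  unfold ER G
  rw [← Finset.sum_add_distrib]
  refine Finset.sum_congr rfl fun ω _ => ?_
  have ht : trace ω π = tr ω (π.act0 (obs0 ω)) (π.act1 (obs0 ω) (π.act0 (obs0 ω))) := rfl
  rcases ho : obs0 ω with _ | _ <;> simp [ht, ho]

set_option maxHeartbeats 2000000 in
lemma G_true_le (a0 : Act) (f : O1 → Act) : G true a0 f ≤ 149 / 300 := by
  rcases a0 with _ | _ | _
  · rcases hw : f O1.w <;> rcases hn : f O1.nwp <;>
      (rw [G, sum_omega];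
       simp [tr, P, obs0, step1, step2, Ra, Rd, Ip, Ii, Iw, Idr, wrist, pen, hw, hn];
       norm_num)
  · rcases hw : f O1.wp <;> rcases hn : f O1.nw <;>
      (rw [G, sum_omega];
       simp [tr, P, obs0, step1, step2, Ra, Rd, Ip, Ii, Iw, Idr, wrist, pen, hw, hn];
       norm_num)
  · rcases hw : f O1.w <;> rcases hn : f O1.nw <;>
      (rw [G, sum_omega];
       simp [tr, P, obs0, step1, step2, Ra, Rd, Ip, Ii, Iw, Idr, wrist, pen, hw, hn];
       norm_num)

set_option maxHeartbeats 2000000 in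
lemma G_false_le (a0 : Act) (f : O1 → Act) : G false a0 f ≤ 148 / 300 := by
  rcases a0 with _ | _ | _
  · rcases hw : f O1.w <;> rcases hn : f O1.nwp <;>
      (rw [G, sum_omega];
       simp [tr, P, obs0, step1, step2, Ra, Rd, Ip, Ii, Iw, Idr, wrist, pen, hw, hn];
       norm_num)
  · rcases hw : f O1.wp <;> rcases hn : f O1.nw <;>
      (rw [G, sum_omega];
       simp [tr, P, obs0, step1, step2, Ra, Rd, Ip, Ii, Iw, Idr, wrist, pen, hw, hn];
       norm_num)
  · rcases hw : f O1.w <;> rcases hn : f O1.nw <;>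
      (rw [G, sum_omega];
       simp [tr, P, obs0, step1, step2, Ra, Rd, Ip, Ii, Iw, Idr, wrist, pen, hw, hn];
       norm_num)

set_option maxHeartbeats 2000000 in
lemma ER_giveAll : ER (fun h => Ra h + Rd h) giveAll = 99 / 100 := by
  rw [ER, sum_omega]
  simp [trace, P, obs0, step1, step2, Ra, Rd, Ip, Ii, Iw, Idr, wrist, pen, giveAll]
  norm_num

set_option maxHeartbeats 2000000 in
lemma ER_lookPol : ER (fun h => Ra h + Rd h) lookPol = 149 / 300 := by
  rw [ER, sum_omega]
  simp [trace, P, obs0, step1, step2, Ra, Rd, Ip, Ii, Iw, Idr, wrist, pen, lookPol]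
  norm_num

/-- The policy maximizing expected reward `R_a + R_d(X_w)` gives a
wristband to everyone and then a drink iff the attendee's state at time 1 is
`w` or `w_p`; its expected reward is `99/100`, strictly exceeding the expected
reward `149/300` of the policy giving wristbands only to mature-looking
attendees and then drinks to wristband wearers. -/
theorem stmt8 :
    (∀ π : Pol, ER (fun h => Ra h + Rd h) π ≤ ER (fun h => Ra h + Rd h) giveAll) ∧
    ER (fun h => Ra h + Rd h) giveAll = 99 / 100 ∧
    ER (fun h => Ra h + Rd h) lookPol = 149 / 300 ∧
    (149 / 300 : ℝ) < 99 / 100 := by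
  refine ⟨fun π => ?_, ER_giveAll, ER_lookPol, by norm_num⟩
  rw [ER_split π, ER_giveAll]
  have h1 := G_true_le (π.act0 true) (π.act1 true (π.act0 true))
  have h2 := G_false_le (π.act0 false) (π.act1 false (π.act0 false))
  linarith

end Wristband
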